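/- arXiv:2302.07565 — 2 statements merged into one kernel-verified Lean document; each statement's English description precedes it below -/
import Mathlib

section
/- Let ℓ ≥ 1 and let z = a + ib with b ∈ [-π/2, π/2]. Let r(z) = φ_ℓ(z) - φ_{ℓ+1}(z). Then |Re(r(z))| < |Re(φ_ℓ(z))| and |Im(r(z))| ≤ |Im(φ_ℓ(z))|, where the second inequality is strict whenever Im(φ_ℓ(z)) ≠ 0. -/
noncomputable def phi (ℓ : ℕ) (z : ℂ) : ℂ :=
  ∑' k : ℕ, z ^ k / (Nat.factorial (k + ℓ) : ℂ)

open MeasureTheory Set Nat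

private lemma fact_prod_nat (k : ℕ) :
    ∀ n : ℕ, k ! * ∏ j ∈ Finset.range n, (k + 1 + j) = (k + n)!
  | 0 => by simp
  | n + 1 => by
    rw [Finset.prod_range_succ, ← mul_assoc, fact_prod_nat k n,
      show k + 1 + n = k + n + 1 by omega, show k + (n + 1) = (k + n) + 1 from rfl,
      Nat.factorial_succ, mul_comm]

private lemma beta_nat (k m : ℕ) :
    ∫ τ in (0:ℝ)..1, (τ : ℂ) ^ k * (1 - (τ : ℂ)) ^ m
      = (k ! : ℂ) * (m ! : ℂ) / ((k + m + 1)! : ℂ) := by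
  have hu : 0 < Complex.re ((k : ℂ) + 1) := by
    simp only [Complex.add_re, Complex.natCast_re, Complex.one_re]
    positivity
  have h := Complex.betaIntegral_eval_nat_add_one_right hu m
  rw [Complex.betaIntegral] at h
  simp only [add_sub_cancel_right, Complex.cpow_natCast] at h
  have hk : (k ! : ℂ) ≠ 0 := Nat.cast_ne_zero.mpr (Nat.factorial_ne_zero k)
  have hkm : (((k + m + 1)! : ℕ) : ℂ) ≠ 0 := Nat.cast_ne_zero.mpr (Nat.factorial_ne_zero _)
  have hp : (∏ j ∈ Finset.range (m + 1), ((k : ℂ) + 1 + j)) = ((k + m + 1)! : ℂ) / (k ! : ℂ) := by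
    have h2 := fact_prod_nat k (m + 1)
    have h3 : ((k ! * ∏ j ∈ Finset.range (m + 1), (k + 1 + j) : ℕ) : ℂ)
        = (((k + m + 1)! : ℕ) : ℂ) := by rw [h2, ← Nat.add_assoc]
    push_cast at h3
    field_simp
    linear_combination h3
  rw [h, hp]
  field_simp

private lemma phi_integral (m : ℕ) (z : ℂ) :
    phi (m + 1) z = (1 / (m ! : ℂ)) * ∫ τ in (0:ℝ)..1, Complex.exp (τ * z) * (1 - (τ:ℂ)) ^ m := by
  set f : ℕ → ℝ → ℂ := fun k τ => z ^ k / (k ! : ℂ) * (τ:ℂ) ^ k * (1 - (τ:ℂ)) ^ m with hf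
  have hfc : ∀ k, Continuous (f k) := by intro k; fun_prop
  have hint : ∀ k : ℕ, Integrable (f k) (volume.restrict (Ioc (0:ℝ) 1)) := fun k =>
    (hfc k).integrableOn_Ioc
  have hbound : ∀ k : ℕ, ∀ τ ∈ Ioc (0:ℝ) 1, ‖f k τ‖ ≤ ‖z‖ ^ k / k ! := by
    intro k τ hτ
    have h1 : ‖(τ:ℂ)‖ = τ := by
      rw [Complex.norm_real, Real.norm_eq_abs, abs_of_pos hτ.1]
    have h2 : ‖1 - (τ:ℂ)‖ = 1 - τ := by
      rw [show (1 - (τ:ℂ)) = ((1 - τ : ℝ) : ℂ) by push_cast; ring, Complex.norm_real,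
        Real.norm_eq_abs, abs_of_nonneg (by linarith [hτ.2])]
    rw [hf]
    simp only [norm_mul, norm_pow, norm_div, Complex.norm_natCast, h1, h2]
    calc ‖z‖ ^ k / (k ! : ℝ) * τ ^ k * (1 - τ) ^ m
        ≤ ‖z‖ ^ k / (k ! : ℝ) * 1 * 1 := by
          have h3 : τ ^ k ≤ 1 := pow_le_one₀ hτ.1.le hτ.2
          have h4 : (1 - τ) ^ m ≤ 1 := pow_le_one₀ (by linarith [hτ.2]) (by linarith [hτ.1])
          have h6 : (0:ℝ) ≤ τ ^ k := pow_nonneg hτ.1.le k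
          have h7 : (0:ℝ) ≤ (1 - τ) ^ m := pow_nonneg (by linarith [hτ.2]) m
          gcongr ?_ * ?_ * ?_ <;> first | positivity | rfl | exact h7 | exact h3 | exact h4
      _ = ‖z‖ ^ k / (k ! : ℝ) := by ring
  have hsum : Summable fun k : ℕ => ∫ τ in Ioc (0:ℝ) 1, ‖f k τ‖ := by
    refine Summable.of_nonneg_of_le (fun k => integral_nonneg fun τ => norm_nonneg _)
      (fun k => ?_) (Real.summable_pow_div_factorial ‖z‖)
    calc ∫ τ in Ioc (0:ℝ) 1, ‖f k τ‖
        ≤ ∫ _ in Ioc (0:ℝ) 1, ‖z‖ ^ k / k ! :=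
          setIntegral_mono_on (hint k).norm
            ((integrableOn_const_iff).mpr (Or.inr (by simp [Real.volume_Ioc])))
            measurableSet_Ioc (hbound k)
      _ = ‖z‖ ^ k / k ! := by simp [Real.volume_Ioc]
  have key := integral_tsum_of_summable_integral_norm hint hsum
  have hev : ∀ k : ℕ, (∫ τ in Ioc (0:ℝ) 1, f k τ) = (m ! : ℂ) * (z ^ k / ((k + m + 1)! : ℂ)) := by
    intro k
    have hk : (k ! : ℂ) ≠ 0 := Nat.cast_ne_zero.mpr (Nat.factorial_ne_zero k)
    have hkm : (((k + m + 1)! : ℕ) : ℂ) ≠ 0 := Nat.cast_ne_zero.mpr (Nat.factorial_ne_zero _)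
    rw [← intervalIntegral.integral_of_le (zero_le_one)]
    simp only [hf, mul_assoc]
    rw [intervalIntegral.integral_const_mul, beta_nat]
    field_simp
  have hpt : ∀ τ : ℝ, (∑' k : ℕ, f k τ) = Complex.exp (τ * z) * (1 - (τ:ℂ)) ^ m := by
    intro τ
    rw [show Complex.exp ((τ:ℂ) * z) = ∑' k : ℕ, ((τ:ℂ) * z) ^ k / k ! from by
      rw [Complex.exp_eq_exp_ℂ, NormedSpace.exp_eq_tsum_div], ← tsum_mul_right]
    congr 1
    funext k
    rw [hf]
    simp only [mul_pow]
    ring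
  rw [intervalIntegral.integral_of_le (zero_le_one)]
  simp_rw [← hpt]
  rw [← key]
  simp_rw [hev]
  rw [tsum_mul_left, phi]
  have hm : (m ! : ℂ) ≠ 0 := Nat.cast_ne_zero.mpr (Nat.factorial_ne_zero m)
  rw [← mul_assoc, one_div, inv_mul_cancel₀ hm, one_mul]
  congr 1

private lemma H_cont (m : ℕ) (z : ℂ) :
    Continuous fun τ : ℝ => Complex.exp (τ * z) * (1 - (τ:ℂ)) ^ m := by fun_prop

private lemma phi_re (m : ℕ) (z : ℂ) :
    (phi (m + 1) z).re
      = (∫ τ in (0:ℝ)..1, Real.exp (τ * z.re) * Real.cos (τ * z.im) * (1 - τ) ^ m) / m ! := by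
  have hI : IntervalIntegrable (fun τ : ℝ => Complex.exp (τ * z) * (1 - (τ:ℂ)) ^ m)
      volume 0 1 := (H_cont m z).intervalIntegrable 0 1
  have h := congrArg Complex.re (phi_integral m z)
  have h1 : (1 / (m ! : ℂ)) = ((1 / (m ! : ℝ) : ℝ) : ℂ) := by push_cast; ring
  rw [h1, Complex.re_ofReal_mul] at h
  have h2 := Complex.reCLM.intervalIntegral_comp_comm hI
  simp only [Complex.reCLM_apply] at h2
  rw [← h2] at h
  rw [h, one_div, inv_mul_eq_div]
  congr 1
  apply intervalIntegral.integral_congr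
  intro τ _
  simp only []
  rw [show (1 - (τ:ℂ)) = ((1 - τ : ℝ) : ℂ) by push_cast; ring, ← Complex.ofReal_pow,
    Complex.mul_re, Complex.ofReal_re, Complex.ofReal_im, mul_zero, sub_zero,
    Complex.exp_re]
  simp [Complex.mul_re, Complex.mul_im]

private lemma phi_im (m : ℕ) (z : ℂ) :
    (phi (m + 1) z).im
      = (∫ τ in (0:ℝ)..1, Real.exp (τ * z.re) * Real.sin (τ * z.im) * (1 - τ) ^ m) / m ! := by
  have hI : IntervalIntegrable (fun τ : ℝ => Complex.exp (τ * z) * (1 - (τ:ℂ)) ^ m)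
      volume 0 1 := (H_cont m z).intervalIntegrable 0 1
  have h := congrArg Complex.im (phi_integral m z)
  have h1 : (1 / (m ! : ℂ)) = ((1 / (m ! : ℝ) : ℝ) : ℂ) := by push_cast; ring
  rw [h1, Complex.im_ofReal_mul] at h
  have h2 := Complex.imCLM.intervalIntegral_comp_comm hI
  simp only [Complex.imCLM_apply] at h2
  rw [← h2] at h
  rw [h, one_div, inv_mul_eq_div]
  congr 1
  apply intervalIntegral.integral_congr
  intro τ _
  simp only []
  rw [show (1 - (τ:ℂ)) = ((1 - τ : ℝ) : ℂ) by push_cast; ring, ← Complex.ofReal_pow,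
    Complex.mul_im, Complex.ofReal_re, Complex.ofReal_im, mul_zero, zero_add,
    Complex.exp_im]
  simp [Complex.mul_re, Complex.mul_im]

private lemma FG_cont (n : ℕ) (a b : ℝ) (w : ℝ → ℝ) (hw : Continuous w) :
    Continuous fun τ : ℝ => Real.exp (τ * a) * w (τ * b) * (1 - τ) ^ n := by fun_prop

private lemma A_pos (n : ℕ) (a b : ℝ) (hb0 : 0 ≤ b) (hb2 : b ≤ Real.pi / 2) :
    0 < ∫ τ in (0:ℝ)..1, Real.exp (τ * a) * Real.cos (τ * b) * (1 - τ) ^ n := by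
  have hpi := Real.pi_pos
  apply intervalIntegral.intervalIntegral_pos_of_pos_on
    ((FG_cont n a b _ Real.continuous_cos).intervalIntegrable 0 1) (fun τ hτ => ?_) zero_lt_one
  have hc : 0 < Real.cos (τ * b) := by
    apply Real.cos_pos_of_mem_Ioo
    constructor
    · nlinarith [mul_nonneg hτ.1.le hb0]
    · nlinarith [hτ.1, hτ.2]
  have h1 : (0:ℝ) < (1 - τ) ^ n := pow_pos (by linarith [hτ.2]) n
  have h2 := Real.exp_pos (τ * a)
  positivity

private lemma A_mono (n : ℕ) (a b : ℝ) (hb0 : 0 ≤ b) (hb2 : b ≤ Real.pi / 2) :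
    (∫ τ in (0:ℝ)..1, Real.exp (τ * a) * Real.cos (τ * b) * (1 - τ) ^ (n + 1))
      ≤ ∫ τ in (0:ℝ)..1, Real.exp (τ * a) * Real.cos (τ * b) * (1 - τ) ^ n := by
  have hpi := Real.pi_pos
  apply intervalIntegral.integral_mono_on zero_le_one
    ((FG_cont (n+1) a b _ Real.continuous_cos).intervalIntegrable 0 1)
    ((FG_cont n a b _ Real.continuous_cos).intervalIntegrable 0 1)
  intro τ hτ
  have hc : 0 ≤ Real.cos (τ * b) := by
    apply Real.cos_nonneg_of_mem_Icc
    constructor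
    · nlinarith [mul_nonneg hτ.1 hb0]
    · nlinarith [hτ.1, hτ.2]
  have h1 : (1 - τ) ^ (n + 1) ≤ (1 - τ) ^ n :=
    pow_le_pow_of_le_one (by linarith [hτ.2]) (by linarith [hτ.1]) (Nat.le_succ n)
  have h2 := mul_nonneg (Real.exp_pos (τ * a)).le hc
  exact mul_le_mul_of_nonneg_left h1 h2

private lemma B_nonneg (n : ℕ) (a b : ℝ) (hb0 : 0 ≤ b) (hb2 : b ≤ Real.pi / 2) :
    0 ≤ ∫ τ in (0:ℝ)..1, Real.exp (τ * a) * Real.sin (τ * b) * (1 - τ) ^ n := by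
  have hpi := Real.pi_pos
  apply intervalIntegral.integral_nonneg zero_le_one
  intro τ hτ
  have hs : 0 ≤ Real.sin (τ * b) := by
    apply Real.sin_nonneg_of_nonneg_of_le_pi (mul_nonneg hτ.1 hb0)
    nlinarith [hτ.1, hτ.2]
  have h1 : (0:ℝ) ≤ (1 - τ) ^ n := pow_nonneg (by linarith [hτ.2]) n
  have h2 := Real.exp_pos (τ * a)
  positivity

private lemma B_mono (n : ℕ) (a b : ℝ) (hb0 : 0 ≤ b) (hb2 : b ≤ Real.pi / 2) :
    (∫ τ in (0:ℝ)..1, Real.exp (τ * a) * Real.sin (τ * b) * (1 - τ) ^ (n + 1))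
      ≤ ∫ τ in (0:ℝ)..1, Real.exp (τ * a) * Real.sin (τ * b) * (1 - τ) ^ n := by
  have hpi := Real.pi_pos
  apply intervalIntegral.integral_mono_on zero_le_one
    ((FG_cont (n+1) a b _ Real.continuous_sin).intervalIntegrable 0 1)
    ((FG_cont n a b _ Real.continuous_sin).intervalIntegrable 0 1)
  intro τ hτ
  have hs : 0 ≤ Real.sin (τ * b) := by
    apply Real.sin_nonneg_of_nonneg_of_le_pi (mul_nonneg hτ.1 hb0)
    nlinarith [hτ.1, hτ.2]
  have h1 : (1 - τ) ^ (n + 1) ≤ (1 - τ) ^ n :=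
    pow_le_pow_of_le_one (by linarith [hτ.2]) (by linarith [hτ.1]) (Nat.le_succ n)
  have h2 := mul_nonneg (Real.exp_pos (τ * a)).le hs
  exact mul_le_mul_of_nonneg_left h1 h2

private lemma B_pos (n : ℕ) (a b : ℝ) (hb0 : 0 < b) (hb2 : b ≤ Real.pi / 2) :
    0 < ∫ τ in (0:ℝ)..1, Real.exp (τ * a) * Real.sin (τ * b) * (1 - τ) ^ n := by
  have hpi := Real.pi_pos
  apply intervalIntegral.intervalIntegral_pos_of_pos_on
    ((FG_cont n a b _ Real.continuous_sin).intervalIntegrable 0 1) (fun τ hτ => ?_) zero_lt_one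
  have hs : 0 < Real.sin (τ * b) := by
    apply Real.sin_pos_of_pos_of_lt_pi (mul_pos hτ.1 hb0)
    nlinarith [hτ.1, hτ.2]
  have h1 : (0:ℝ) < (1 - τ) ^ n := pow_pos (by linarith [hτ.2]) n
  have h2 := Real.exp_pos (τ * a)
  positivity

private lemma B_zero (n : ℕ) (a : ℝ) :
    (∫ τ in (0:ℝ)..1, Real.exp (τ * a) * Real.sin (τ * 0) * (1 - τ) ^ n) = 0 := by
  simp

private lemma phi_conj (ℓ : ℕ) (z : ℂ) :
    phi ℓ ((starRingEnd ℂ) z) = (starRingEnd ℂ) (phi ℓ z) := by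
  rw [phi, phi, Complex.conj_tsum]
  congr 1
  funext k
  rw [map_div₀, map_pow]
  simp

private lemma aux_main (m : ℕ) (z : ℂ) (hb0 : 0 ≤ z.im) (hb2 : z.im ≤ Real.pi / 2) :
    |(phi (m + 1) z - phi (m + 1 + 1) z).re| < |(phi (m + 1) z).re| ∧
    |(phi (m + 1) z - phi (m + 1 + 1) z).im| ≤ |(phi (m + 1) z).im| ∧
    ((phi (m + 1) z).im ≠ 0 →
      |(phi (m + 1) z - phi (m + 1 + 1) z).im| < |(phi (m + 1) z).im|) := by
  have e1 := phi_re m z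
  have e2 := phi_re (m + 1) z
  have f1 := phi_im m z
  have f2 := phi_im (m + 1) z
  have hm : (0:ℝ) < (m ! : ℝ) := by exact_mod_cast Nat.factorial_pos m
  have hm1 : (0:ℝ) < ((m + 1)! : ℝ) := by exact_mod_cast Nat.factorial_pos (m + 1)
  have hmle : (m ! : ℝ) ≤ ((m + 1)! : ℝ) := by
    exact_mod_cast Nat.factorial_le (Nat.le_succ m)
  -- real part
  have hx2pos : 0 < (phi (m + 1 + 1) z).re := by
    rw [e2]
    exact div_pos (A_pos (m + 1) z.re z.im hb0 hb2) hm1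
  have hx21 : (phi (m + 1 + 1) z).re ≤ (phi (m + 1) z).re := by
    rw [e1, e2]
    apply div_le_div₀ (A_pos m z.re z.im hb0 hb2).le (A_mono m z.re z.im hb0 hb2) hm hmle
  -- imaginary part
  have hy2nonneg : 0 ≤ (phi (m + 1 + 1) z).im := by
    rw [f2]
    exact div_nonneg (B_nonneg (m + 1) z.re z.im hb0 hb2) hm1.le
  have hy1nonneg : 0 ≤ (phi (m + 1) z).im := by
    rw [f1]
    exact div_nonneg (B_nonneg m z.re z.im hb0 hb2) hm.le
  have hy21 : (phi (m + 1 + 1) z).im ≤ (phi (m + 1) z).im := by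
    rw [f1, f2]
    apply div_le_div₀ (B_nonneg m z.re z.im hb0 hb2) (B_mono m z.re z.im hb0 hb2) hm hmle
  refine ⟨?_, ?_, ?_⟩
  · rw [Complex.sub_re, abs_of_nonneg (by linarith), abs_of_pos (by linarith)]
    linarith
  · rw [Complex.sub_im, abs_of_nonneg (by linarith), abs_of_nonneg hy1nonneg]
    linarith
  · intro hne
    have hbpos : 0 < z.im := by
      rcases lt_or_eq_of_le hb0 with h | h
      · exact h
      · exfalso
        apply hne
        rw [f1, ← h, B_zero m z.re, zero_div]
    have hy2pos : 0 < (phi (m + 1 + 1) z).im := by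
      rw [f2]
      exact div_pos (B_pos (m + 1) z.re z.im hbpos hb2) hm1
    rw [Complex.sub_im, abs_of_nonneg (by linarith), abs_of_nonneg hy1nonneg]
    linarith

theorem residual_bounds (ℓ : ℕ) (hℓ : 1 ≤ ℓ) (z : ℂ)
    (hz : z.im ∈ Set.Icc (-(Real.pi / 2)) (Real.pi / 2)) :
    |(phi ℓ z - phi (ℓ + 1) z).re| < |(phi ℓ z).re| ∧
    |(phi ℓ z - phi (ℓ + 1) z).im| ≤ |(phi ℓ z).im| ∧
    ((phi ℓ z).im ≠ 0 → |(phi ℓ z - phi (ℓ + 1) z).im| < |(phi ℓ z).im|) := by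
  obtain ⟨m, rfl⟩ : ∃ m, ℓ = m + 1 := ⟨ℓ - 1, (Nat.succ_pred_eq_of_pos hℓ).symm⟩
  obtain ⟨hz1, hz2⟩ := hz
  rcases le_or_gt 0 z.im with hb0 | hb0
  · exact aux_main m z hb0 hz2
  · have h := aux_main m ((starRingEnd ℂ) z)
      (by simp only [Complex.conj_im]; linarith)
      (by simp only [Complex.conj_im]; linarith)
    simpa only [phi_conj, ← map_sub, Complex.conj_re, Complex.conj_im, abs_neg,
      ne_eq, neg_eq_zero] using h
end

section
/- Let A be an N×N complex matrix all of whose eigenvalues lie in the strip {z ∈ ℂ : |Im z| ≤ π/2}. Then for every ℓ ≥ 1 the matrix φ_ℓ(A) is invertible. -/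
open Polynomial Matrix Filter MeasureTheory Set

noncomputable def phiM {N : ℕ} (ℓ : ℕ) (A : Matrix (Fin N) (Fin N) ℂ) :
    Matrix (Fin N) (Fin N) ℂ :=
  ∑' k : ℕ, ((Nat.factorial (k + ℓ) : ℂ))⁻¹ • A ^ k

noncomputable def phiC (ℓ : ℕ) (z : ℂ) : ℂ := ∑' k : ℕ, ((Nat.factorial (k + ℓ) : ℂ))⁻¹ * z ^ k

lemma phiC_summable (ℓ : ℕ) (z : ℂ) :
    Summable (fun k : ℕ => ((Nat.factorial (k + ℓ) : ℂ))⁻¹ * z ^ k) := by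
  apply Summable.of_norm_bounded (Real.summable_pow_div_factorial ‖z‖)
  intro k
  rw [norm_mul, norm_pow, norm_inv, Complex.norm_natCast]
  rw [div_eq_inv_mul, mul_comm ((k.factorial:ℝ)⁻¹), mul_comm]
  have h1 : ((k + ℓ).factorial : ℝ)⁻¹ ≤ (k.factorial : ℝ)⁻¹ := by
    apply inv_anti₀
    · exact_mod_cast k.factorial_pos
    · exact_mod_cast Nat.factorial_le (Nat.le_add_right k ℓ)
  exact mul_le_mul_of_nonneg_left h1 (pow_nonneg (norm_nonneg z) k)

lemma fact_prod (k m : ℕ) :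
    (k.factorial : ℂ) * (∏ j ∈ Finset.range (m + 1), ((k:ℂ) + 1 + j)) = ((k + m + 1).factorial : ℂ) := by
  have key : k.factorial * (∏ j ∈ Finset.range (m + 1), (k + 1 + j)) = (k + m + 1).factorial := by
    induction m with
    | zero => simp [Nat.factorial_succ]; ring
    | succ m ih =>
      rw [Finset.prod_range_succ, ← mul_assoc, ih,
        show k + (m+1) + 1 = (k + m + 1) + 1 from by omega, Nat.factorial_succ,
        show k + 1 + (m+1) = k + m + 1 + 1 from by omega]
      exact Nat.mul_comm _ _
  calc (k.factorial : ℂ) * (∏ j ∈ Finset.range (m + 1), ((k:ℂ) + 1 + j))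
      = ((k.factorial * ∏ j ∈ Finset.range (m + 1), (k + 1 + j) : ℕ) : ℂ) := by push_cast; ring
    _ = _ := by rw [key]

lemma term_integral (z : ℂ) (k m : ℕ) :
    ∫ t in Ioc (0:ℝ) 1, (((t:ℂ) * z) ^ k / k.factorial * ((1:ℂ) - t) ^ m) =
      z ^ k * (m.factorial : ℂ) / ((k + m + 1).factorial : ℂ) := by
  have hbeta := Complex.betaIntegral_eval_nat_add_one_right
    (u := (k:ℂ) + 1) (by simp [Complex.add_re]; positivity) m
  rw [Complex.betaIntegral] at hbeta
  have hconv : (∫ x : ℝ in (0:ℝ)..1, (x : ℂ) ^ ((k:ℂ) + 1 - 1) * (1 - (x : ℂ)) ^ (((m:ℂ) + 1) - 1))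
      = ∫ x : ℝ in (0:ℝ)..1, (x : ℂ) ^ k * (1 - (x : ℂ)) ^ m := by
    congr 1
    ext x
    rw [show (k:ℂ) + 1 - 1 = (k:ℂ) by ring, show ((m:ℂ) + 1) - 1 = (m:ℂ) by ring,
      Complex.cpow_natCast, Complex.cpow_natCast]
  rw [hconv] at hbeta
  have h2 : (∫ t in Ioc (0:ℝ) 1, (((t:ℂ) * z) ^ k / k.factorial * ((1:ℂ) - t) ^ m))
      = (z ^ k / k.factorial) * ∫ x : ℝ in (0:ℝ)..1, (x : ℂ) ^ k * (1 - (x : ℂ)) ^ m := by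
    rw [intervalIntegral.integral_of_le (by norm_num : (0:ℝ) ≤ 1), ← integral_const_mul]
    congr 1; ext t; ring
  rw [h2, hbeta]
  have hfac : ((k.factorial : ℂ)) ≠ 0 := by exact_mod_cast k.factorial_pos.ne'
  have hprod : (∏ j ∈ Finset.range (m + 1), ((k:ℂ) + 1 + j)) ≠ 0 := by
    apply Finset.prod_ne_zero_iff.mpr
    intro j _
    have : (0:ℝ) < (k:ℝ) + 1 + j := by positivity
    intro h
    have := congrArg Complex.re h
    simp at this
    norm_cast at this
    omega
  rw [div_mul_div_comm, fact_prod]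

lemma phiC_eq_integral (z : ℂ) (m : ℕ) :
    (m.factorial : ℂ) * phiC (m + 1) z =
      ∫ t in Ioc (0:ℝ) 1, Complex.exp (t * z) * ((1:ℂ) - t) ^ m := by
  set F : ℕ → ℝ → ℂ := fun k t => ((t:ℂ) * z) ^ k / k.factorial * ((1:ℂ) - t) ^ m with hF
  have hmeas : ∀ k, AEStronglyMeasurable (F k) (volume.restrict (Ioc (0:ℝ) 1)) := by
    intro k
    apply Continuous.aestronglyMeasurable
    fun_prop
  have hbound : ∀ k, ∀ t ∈ Ioc (0:ℝ) 1, ‖F k t‖ ≤ ‖z‖ ^ k / k.factorial := by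
    intro k t ht
    have ht1 : ‖(t:ℂ)‖ ≤ 1 := by
      rw [Complex.norm_real, Real.norm_eq_abs, abs_le]
      exact ⟨by linarith [ht.1], ht.2⟩
    have h2 : ‖(1:ℂ) - (t:ℝ)‖ ≤ 1 := by
      rw [show ((1:ℂ) - t) = ((1 - t : ℝ) : ℂ) by push_cast; ring, Complex.norm_real,
        Real.norm_eq_abs, abs_le]
      exact ⟨by linarith [ht.2], by linarith [ht.1]⟩
    rw [hF]
    simp only [norm_mul, norm_div, norm_pow, Complex.norm_natCast]
    calc (‖(t:ℂ)‖ * ‖z‖) ^ k / (k.factorial : ℝ) * ‖(1:ℂ) - (t:ℝ)‖ ^ m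
        ≤ (1 * ‖z‖) ^ k / (k.factorial : ℝ) * 1 ^ m := by
          gcongr
      _ = ‖z‖ ^ k / k.factorial := by rw [one_mul, one_pow, mul_one]
  have hsum : Summable (fun k : ℕ => ‖z‖ ^ k / (k.factorial : ℝ)) :=
    Real.summable_pow_div_factorial ‖z‖
  have hlint : ∑' k : ℕ, ∫⁻ t, ‖F k t‖₊ ∂(volume.restrict (Ioc (0:ℝ) 1)) ≠ ⊤ := by
    have hb : ∀ k : ℕ, (∫⁻ t, ‖F k t‖₊ ∂(volume.restrict (Ioc (0:ℝ) 1)))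
        ≤ ENNReal.ofReal (‖z‖ ^ k / k.factorial) := by
      intro k
      calc ∫⁻ t, ‖F k t‖₊ ∂(volume.restrict (Ioc (0:ℝ) 1))
          ≤ ∫⁻ _, ENNReal.ofReal (‖z‖ ^ k / k.factorial) ∂(volume.restrict (Ioc (0:ℝ) 1)) := by
            apply lintegral_mono_ae
            rw [ae_restrict_iff' measurableSet_Ioc]
            filter_upwards with t ht
            rw [← ENNReal.ofReal_coe_nnreal, coe_nnnorm]
            exact ENNReal.ofReal_le_ofReal (hbound k t ht)
        _ = ENNReal.ofReal (‖z‖ ^ k / k.factorial) * volume (Ioc (0:ℝ) 1) := by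
            rw [lintegral_const, Measure.restrict_apply MeasurableSet.univ, univ_inter]
        _ ≤ ENNReal.ofReal (‖z‖ ^ k / k.factorial) := by
            rw [Real.volume_Ioc]
            norm_num
    have : ∑' k : ℕ, ∫⁻ t, ‖F k t‖₊ ∂(volume.restrict (Ioc (0:ℝ) 1))
        ≤ ∑' k : ℕ, ENNReal.ofReal (‖z‖ ^ k / k.factorial) := ENNReal.tsum_le_tsum hb
    refine ne_top_of_le_ne_top ?_ this
    rw [← ENNReal.ofReal_tsum_of_nonneg (fun k => by positivity) hsum]
    exact ENNReal.ofReal_ne_top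
  have hswap := MeasureTheory.integral_tsum hmeas hlint
  have hpt : ∀ t : ℝ, (∑' k, F k t) = Complex.exp (t * z) * ((1:ℂ) - t) ^ m := by
    intro t
    rw [hF]
    rw [show Complex.exp ((t:ℂ) * z) = ∑' k : ℕ, ((t:ℂ)*z) ^ k / k.factorial from by
      rw [Complex.exp_eq_exp_ℂ, NormedSpace.exp_eq_tsum_div]]
    exact tsum_mul_right
  have hterm : ∀ k : ℕ, (∫ t in Ioc (0:ℝ) 1, F k t)
      = (m.factorial : ℂ) * (((Nat.factorial (k + (m+1)) : ℂ))⁻¹ * z ^ k) := by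
    intro k
    rw [hF]
    rw [term_integral z k m]
    rw [show k + (m + 1) = k + m + 1 from rfl]
    have : ((k+m+1).factorial : ℂ) ≠ 0 := by exact_mod_cast (k+m+1).factorial_pos.ne'
    field_simp
  calc (m.factorial : ℂ) * phiC (m + 1) z
      = ∑' k : ℕ, (m.factorial : ℂ) * (((Nat.factorial (k + (m+1)) : ℂ))⁻¹ * z ^ k) := by
        rw [phiC, tsum_mul_left]
    _ = ∑' k : ℕ, ∫ t in Ioc (0:ℝ) 1, F k t := by
        congr 1; ext k; rw [hterm k]
    _ = ∫ t in Ioc (0:ℝ) 1, (∑' k, F k t) := hswap.symm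
    _ = _ := by congr 1; ext t; rw [hpt t]

lemma integral_re_pos {z : ℂ} (hz : |z.im| ≤ Real.pi / 2) (m : ℕ) :
    0 < (∫ t in Ioc (0:ℝ) 1, Complex.exp (t * z) * ((1:ℂ) - t) ^ m).re := by
  have hcont : Continuous (fun t : ℝ => Complex.exp (t * z) * ((1:ℂ) - t) ^ m) := by fun_prop
  have hint : IntegrableOn (fun t : ℝ => Complex.exp (t * z) * ((1:ℂ) - t) ^ m)
      (Ioc (0:ℝ) 1) volume := hcont.integrableOn_Ioc
  have hswap : (∫ t in Ioc (0:ℝ) 1, Complex.exp (t * z) * ((1:ℂ) - t) ^ m).re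
      = ∫ t in Ioc (0:ℝ) 1, (Complex.exp (t * z) * ((1:ℂ) - t) ^ m).re := by
    rw [← RCLike.re_eq_complex_re, ← integral_re hint]
  rw [hswap]
  have hre : ∀ t : ℝ, (Complex.exp (t * z) * ((1:ℂ) - t) ^ m).re
      = Real.exp (t * z.re) * Real.cos (t * z.im) * (1 - t) ^ m := by
    intro t
    rw [show ((1:ℂ) - t) = ((1 - t : ℝ) : ℂ) by push_cast; ring, ← Complex.ofReal_pow,
      Complex.mul_re, Complex.ofReal_re, Complex.ofReal_im, mul_zero, sub_zero,
      Complex.exp_re]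
    have h1 : ((t:ℂ) * z).re = t * z.re := by simp [Complex.mul_re]
    have h2 : ((t:ℂ) * z).im = t * z.im := by simp [Complex.mul_im]
    rw [h1, h2]
  simp_rw [hre]
  rw [← intervalIntegral.integral_of_le (by norm_num : (0:ℝ) ≤ 1)]
  apply intervalIntegral.intervalIntegral_pos_of_pos_on
  · apply Continuous.intervalIntegrable
    fun_prop
  · intro t ht
    have h1 : 0 < Real.exp (t * z.re) := Real.exp_pos _
    have h2 : 0 < Real.cos (t * z.im) := by
      apply Real.cos_pos_of_mem_Ioo
      constructor
      · have : |t * z.im| ≤ t * (Real.pi / 2) := by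
          rw [abs_mul, abs_of_pos ht.1]
          exact mul_le_mul_of_nonneg_left hz ht.1.le
        have h3 : t * (Real.pi / 2) < Real.pi / 2 := by
          have := Real.pi_pos
          nlinarith [ht.2]
        have := abs_lt.mp (lt_of_le_of_lt this h3)
        linarith [this.1]
      · have : |t * z.im| ≤ t * (Real.pi / 2) := by
          rw [abs_mul, abs_of_pos ht.1]
          exact mul_le_mul_of_nonneg_left hz ht.1.le
        have h3 : t * (Real.pi / 2) < Real.pi / 2 := by
          have := Real.pi_pos
          nlinarith [ht.2]
        have := abs_lt.mp (lt_of_le_of_lt this h3)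
        linarith [this.2]
    have h3 : 0 < (1 - t) ^ m := by
      apply pow_pos
      linarith [ht.2]
    positivity
  · norm_num

lemma phiC_ne_zero {z : ℂ} (hz : |z.im| ≤ Real.pi / 2) {ℓ : ℕ} (hℓ : 1 ≤ ℓ) :
    phiC ℓ z ≠ 0 := by
  obtain ⟨m, rfl⟩ : ∃ m, ℓ = m + 1 := ⟨ℓ - 1, by omega⟩
  intro h
  have := phiC_eq_integral z m
  rw [h, mul_zero] at this
  have hpos := integral_re_pos hz m
  rw [← this] at hpos
  simp at hpos

variable {N : ℕ}

lemma charpoly_eval (A : Matrix (Fin N) (Fin N) ℂ) (a : ℂ) :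
    A.charpoly.eval a = (a • (1 : Matrix (Fin N) (Fin N) ℂ) - A).det := by
  rw [Matrix.charpoly, show Polynomial.eval a = ⇑(Polynomial.evalRingHom a) from rfl,
    RingHom.map_det]
  congr 1
  ext i j
  by_cases h : i = j <;>
    simp [h, charmatrix_apply, Matrix.map_apply, Matrix.diagonal, Matrix.one_apply,
      Matrix.smul_apply, Matrix.sub_apply]

lemma det_sub_smul (A : Matrix (Fin N) (Fin N) ℂ) (a : ℂ) :
    (A - a • (1 : Matrix (Fin N) (Fin N) ℂ)).det
      = (A.charpoly.roots.map fun μ => μ - a).prod := by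
  have hsplit : A.charpoly.Splits := IsAlgClosed.splits _
  have hfact := hsplit.eq_prod_roots_of_monic (Matrix.charpoly_monic A)
  have hcard : Multiset.card A.charpoly.roots = N := by
    have h := (Polynomial.splits_iff_card_roots).mp hsplit
    simpa [Matrix.charpoly_natDegree_eq_dim] using h
  have heval : A.charpoly.eval a = (A.charpoly.roots.map fun μ => a - μ).prod := by
    conv_lhs => rw [hfact]
    rw [Polynomial.eval_multiset_prod, Multiset.map_map]
    congr 1
    ext μ
    simp
  have h1 : A - a • 1 = -(a • (1 : Matrix (Fin N) (Fin N) ℂ) - A) := (neg_sub _ _).symm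
  rw [h1, Matrix.det_neg, ← charpoly_eval, heval, Fintype.card_fin]
  have : (A.charpoly.roots.map fun μ => μ - a)
      = (A.charpoly.roots.map fun μ => (-1) * (a - μ)) := by
    congr 1; ext μ; ring
  rw [this, Multiset.prod_map_mul]
  congr 1
  rw [Multiset.map_const', Multiset.prod_replicate, hcard]

lemma det_aeval_prod (A : Matrix (Fin N) (Fin N) ℂ) (s : Multiset ℂ) :
    ((aeval A) ((s.map fun a => X - C a).prod)).det
      = (s.map fun a => (A - a • (1 : Matrix (Fin N) (Fin N) ℂ)).det).prod := by
  induction s using Multiset.induction with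
  | empty => simp
  | cons a s ih =>
    rw [Multiset.map_cons, Multiset.prod_cons, _root_.map_mul, Matrix.det_mul, Multiset.map_cons,
      Multiset.prod_cons, ih]
    congr 1
    rw [map_sub, aeval_X, aeval_C, Algebra.algebraMap_eq_smul_one]

lemma det_aeval (A : Matrix (Fin N) (Fin N) ℂ) (p : ℂ[X]) (hp : p ≠ 0) :
    ((aeval A) p).det = (A.charpoly.roots.map fun μ => p.eval μ).prod := by
  have hsplit : A.charpoly.Splits := IsAlgClosed.splits _
  have hcard : Multiset.card A.charpoly.roots = N := by
    have h := (Polynomial.splits_iff_card_roots).mp hsplit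
    simpa [Matrix.charpoly_natDegree_eq_dim] using h
  have hpfact := (IsAlgClosed.splits p).eq_prod_roots
  set c := p.leadingCoeff with hc
  have hpe : ∀ μ : ℂ, p.eval μ = c * ((p.roots.map fun a => μ - a).prod) := by
    intro μ
    conv_lhs => rw [hpfact]
    rw [eval_mul, eval_C, Polynomial.eval_multiset_prod, Multiset.map_map]
    congr 2
    ext a
    simp
  conv_lhs => rw [hpfact]
  rw [_root_.map_mul, aeval_C, Algebra.algebraMap_eq_smul_one, smul_one_mul, Matrix.det_smul,
    det_aeval_prod, Fintype.card_fin]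
  simp_rw [det_sub_smul]
  rw [Multiset.prod_map_prod_map]
  have : ∀ μ : ℂ, (p.roots.map fun a => μ - a).prod = c⁻¹ * p.eval μ := by
    intro μ
    rw [hpe μ, ← mul_assoc, inv_mul_cancel₀ (by rwa [hc, Polynomial.leadingCoeff_ne_zero]),
      one_mul]
  simp_rw [this]
  rw [show (fun μ => c⁻¹ * p.eval μ) = (fun μ => c⁻¹ * p.eval μ) from rfl]
  have hprodmul : (A.charpoly.roots.map fun μ => c⁻¹ * p.eval μ).prod
      = (A.charpoly.roots.map fun _ => c⁻¹).prod * (A.charpoly.roots.map fun μ => p.eval μ).prod :=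
    Multiset.prod_map_mul
  rw [hprodmul, Multiset.map_const', Multiset.prod_replicate, hcard, ← mul_assoc, ← mul_pow,
    mul_inv_cancel₀ (by rwa [hc, Polynomial.leadingCoeff_ne_zero]), one_pow, one_mul]

theorem phiM_isUnit {N : ℕ} (A : Matrix (Fin N) (Fin N) ℂ)
    (hA : ∀ μ : ℂ, A.charpoly.IsRoot μ → |μ.im| ≤ Real.pi / 2)
    (ℓ : ℕ) (hℓ : 1 ≤ ℓ) : IsUnit (phiM ℓ A) := by
  rw [Matrix.isUnit_iff_isUnit_det, isUnit_iff_ne_zero]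
  set c : ℕ → ℂ := fun k => ((Nat.factorial (k + ℓ) : ℂ))⁻¹ with hc
  -- the partial-sum polynomials
  set p : ℕ → ℂ[X] := fun n => ∑ k ∈ Finset.range n, C (c k) * X ^ k with hp
  have haeval : ∀ n, (aeval A) (p n) = ∑ k ∈ Finset.range n, c k • A ^ k := by
    intro n
    rw [hp, map_sum]
    congr 1
    ext k
    rw [_root_.map_mul, aeval_C, aeval_X_pow, Algebra.smul_def]
  have heval : ∀ n (μ : ℂ), (p n).eval μ = ∑ k ∈ Finset.range n, c k * μ ^ k := by
    intro n μ
    rw [hp, eval_finset_sum]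
    congr 1
    ext k
    rw [eval_mul, eval_C, eval_pow, eval_X]
  have hpne : ∀ n, 1 ≤ n → p n ≠ 0 := by
    intro n hn h0
    have h1 : (p n).eval 0 = c 0 := by
      rw [heval]
      rw [Finset.sum_eq_single_of_mem 0 (Finset.mem_range.mpr hn)]
      · norm_num
      · intro k _ hk
        rw [zero_pow hk, mul_zero]
    rw [h0, eval_zero] at h1
    have : c 0 ≠ 0 := by
      rw [hc]
      simp only [zero_add]
      exact inv_ne_zero (by exact_mod_cast ℓ.factorial_pos.ne')
    exact this h1.symm
  -- summability of the matrix series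
  letI : NormedRing (Matrix (Fin N) (Fin N) ℂ) := Matrix.linftyOpNormedRing
  letI : NormedAlgebra ℂ (Matrix (Fin N) (Fin N) ℂ) := Matrix.linftyOpNormedAlgebra
  have hsumM : Summable (fun k : ℕ => c k • A ^ k) := by
    apply Summable.of_norm_bounded_eventually_nat (g := fun k => ‖A‖ ^ k / k.factorial)
      (Real.summable_pow_div_factorial ‖A‖)
    filter_upwards [Filter.eventually_ge_atTop 1] with k hk
    rw [norm_smul]
    have h1 : ‖c k‖ ≤ ((k.factorial : ℝ))⁻¹ := by
      rw [hc]
      simp only [norm_inv, Complex.norm_natCast]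
      apply inv_anti₀
      · exact_mod_cast k.factorial_pos
      · exact_mod_cast Nat.factorial_le (Nat.le_add_right k ℓ)
    have h2 : ‖A ^ k‖ ≤ ‖A‖ ^ k := norm_pow_le' A hk
    calc ‖c k‖ * ‖A ^ k‖ ≤ (k.factorial : ℝ)⁻¹ * ‖A‖ ^ k := by
          apply mul_le_mul h1 h2 (norm_nonneg _)
          positivity
      _ = ‖A‖ ^ k / k.factorial := by ring
  -- the determinant converges
  have hdet_lim : Tendsto (fun n => (∑ k ∈ Finset.range n, c k • A ^ k).det) atTop
      (nhds (phiM ℓ A).det) := by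
    have h1 : Tendsto (fun n => ∑ k ∈ Finset.range n, c k • A ^ k) atTop (nhds (phiM ℓ A)) :=
      hsumM.hasSum.tendsto_sum_nat
    exact ((continuous_id.matrix_det).tendsto _).comp h1
  -- the root products converge
  have hroots_lim : Tendsto (fun n => (A.charpoly.roots.map fun μ => (p n).eval μ).prod) atTop
      (nhds ((A.charpoly.roots.map fun μ => phiC ℓ μ).prod)) := by
    apply tendsto_multiset_prod
    intro μ _
    have : Tendsto (fun n => ∑ k ∈ Finset.range n, c k * μ ^ k) atTop (nhds (phiC ℓ μ)) :=
      (phiC_summable ℓ μ).hasSum.tendsto_sum_nat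
    simp_rw [heval]
    exact this
  -- identify the limits
  have hkey : (phiM ℓ A).det = (A.charpoly.roots.map fun μ => phiC ℓ μ).prod := by
    apply tendsto_nhds_unique _ hroots_lim
    apply hdet_lim.congr'
    filter_upwards [Filter.eventually_ge_atTop 1] with n hn
    rw [← haeval, det_aeval A (p n) (hpne n hn)]
  rw [hkey]
  rw [Ne, Multiset.prod_eq_zero_iff]
  intro h0
  obtain ⟨μ, hμ, hμ0⟩ := Multiset.mem_map.mp h0
  exact phiC_ne_zero (hA μ (Polynomial.isRoot_of_mem_roots hμ)) hℓ hμ0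
end
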